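/- In the field ℚ(x_1,x_2) of rational functions in two variables over ℚ, the following identity holds: (x_1 − x_2)·1/((1−x_1^4)(1−x_1^3x_2)(1−x_1^2x_2^2)(1−x_1x_2^3)(1−x_2^4)) = x_1·h(x_1, x_1x_2) − x_2·h(x_2, x_1x_2), where h(v_1,v_2) = (1 − v_1^2v_2 + v_1^4v_2^2)/((1−v_1^4)(1−v_1^2v_2)(1−v_2^4)(1−v_2^6)). (This expresses that h is the multiplicity series M' of the Hilbert series of the symmetric algebra K[W(4)] of the irreducible GL_2-module W(4).) -/
import Mathlib


/-- The candidate multiplicity series `M'(H(K[W(4)]); v₁, v₂)`. -/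
noncomputable def multSeriesW4 (v1 v2 : FractionRing (MvPolynomial (Fin 2) ℚ)) :
    FractionRing (MvPolynomial (Fin 2) ℚ) :=
  (1 - v1 ^ 2 * v2 + v1 ^ 4 * v2 ^ 2) /
    ((1 - v1 ^ 4) * (1 - v1 ^ 2 * v2) * (1 - v2 ^ 4) * (1 - v2 ^ 6))

private lemma aux_ne_zero (p : MvPolynomial (Fin 2) ℚ)
    (h : MvPolynomial.constantCoeff p = 1) :
    algebraMap (MvPolynomial (Fin 2) ℚ) (FractionRing (MvPolynomial (Fin 2) ℚ)) p ≠ 0 := by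
  have hp : p ≠ 0 := by
    intro h0
    rw [h0, map_zero] at h
    exact one_ne_zero h.symm
  exact fun hc => hp ((map_eq_zero_iff _ (IsFractionRing.injective _ _)).mp hc)

private lemma one_sub_ne (a b : ℕ) (hab : 0 < a + b)
    (x1 x2 : FractionRing (MvPolynomial (Fin 2) ℚ))
    (hx1 : x1 = algebraMap (MvPolynomial (Fin 2) ℚ) _ (MvPolynomial.X 0))
    (hx2 : x2 = algebraMap (MvPolynomial (Fin 2) ℚ) _ (MvPolynomial.X 1)) :
    (1 : FractionRing (MvPolynomial (Fin 2) ℚ)) - x1 ^ a * x2 ^ b ≠ 0 := by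
  have : (1 : FractionRing (MvPolynomial (Fin 2) ℚ)) - x1 ^ a * x2 ^ b =
      algebraMap (MvPolynomial (Fin 2) ℚ) _
        (1 - MvPolynomial.X 0 ^ a * MvPolynomial.X 1 ^ b) := by
    rw [hx1, hx2, map_sub, map_one, map_mul, map_pow, map_pow]
  rw [this]
  apply aux_ne_zero
  have h0 : (MvPolynomial.constantCoeff (MvPolynomial.X 0 ^ a * MvPolynomial.X 1 ^ b :
      MvPolynomial (Fin 2) ℚ)) = 0 := by
    rw [map_mul, map_pow, map_pow, MvPolynomial.constantCoeff_X, MvPolynomial.constantCoeff_X]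
    rcases Nat.eq_zero_or_pos a with ha | ha
    · have hb : b ≠ 0 := by omega
      simp [zero_pow hb]
    · simp [zero_pow ha.ne']
  rw [map_sub, map_one, h0, sub_zero]

/-- In `ℚ(x₁,x₂)` one has
`(x₁ − x₂)/((1−x₁⁴)(1−x₁³x₂)(1−x₁²x₂²)(1−x₁x₂³)(1−x₂⁴)) = x₁·h(x₁,x₁x₂) − x₂·h(x₂,x₁x₂)`
with `h(v₁,v₂) = (1 − v₁²v₂ + v₁⁴v₂²)/((1−v₁⁴)(1−v₁²v₂)(1−v₂⁴)(1−v₂⁶))`, i.e. `h` is the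
multiplicity series of the Hilbert series of the symmetric algebra `K[W(4)]`. -/
theorem multiplicity_series_KW4
    (x1 x2 : FractionRing (MvPolynomial (Fin 2) ℚ))
    (hx1 : x1 = algebraMap (MvPolynomial (Fin 2) ℚ) _ (MvPolynomial.X 0))
    (hx2 : x2 = algebraMap (MvPolynomial (Fin 2) ℚ) _ (MvPolynomial.X 1)) :
    (x1 - x2) *
        (1 / ((1 - x1 ^ 4) * (1 - x1 ^ 3 * x2) * (1 - x1 ^ 2 * x2 ^ 2) *
          (1 - x1 * x2 ^ 3) * (1 - x2 ^ 4))) =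
      x1 * multSeriesW4 x1 (x1 * x2) - x2 * multSeriesW4 x2 (x1 * x2) := by
  have H : ∀ a b : ℕ, 0 < a + b →
      (1 : FractionRing (MvPolynomial (Fin 2) ℚ)) - x1 ^ a * x2 ^ b ≠ 0 :=
    fun a b hab => one_sub_ne a b hab x1 x2 hx1 hx2
  have h40 := H 4 0 (by norm_num)
  have h31 := H 3 1 (by norm_num)
  have h22 := H 2 2 (by norm_num)
  have h13 := H 1 3 (by norm_num)
  have h04 := H 0 4 (by norm_num)
  have h44 := H 4 4 (by norm_num)
  have h66 := H 6 6 (by norm_num)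
  simp only [pow_zero, pow_one, one_mul, mul_one] at h40 h31 h22 h13 h04
  unfold multSeriesW4
  have e1 : (1 : FractionRing (MvPolynomial (Fin 2) ℚ)) - (x1 * x2) ^ 4 =
      1 - x1 ^ 4 * x2 ^ 4 := by ring
  have e2 : (1 : FractionRing (MvPolynomial (Fin 2) ℚ)) - (x1 * x2) ^ 6 =
      1 - x1 ^ 6 * x2 ^ 6 := by ring
  have e3 : (1 : FractionRing (MvPolynomial (Fin 2) ℚ)) - x1 ^ 2 * (x1 * x2) =
      1 - x1 ^ 3 * x2 := by ring
  have e4 : (1 : FractionRing (MvPolynomial (Fin 2) ℚ)) - x2 ^ 2 * (x1 * x2) =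
      1 - x1 * x2 ^ 3 := by ring
  rw [e1, e2, e3, e4]
  have hd1 : (1 - x1 ^ 4) * (1 - x1 ^ 3 * x2) * (1 - x1 ^ 4 * x2 ^ 4) *
      (1 - x1 ^ 6 * x2 ^ 6) ≠ 0 :=
    mul_ne_zero (mul_ne_zero (mul_ne_zero h40 h31) h44) h66
  have hd2 : (1 - x2 ^ 4) * (1 - x1 * x2 ^ 3) * (1 - x1 ^ 4 * x2 ^ 4) *
      (1 - x1 ^ 6 * x2 ^ 6) ≠ 0 :=
    mul_ne_zero (mul_ne_zero (mul_ne_zero h04 h13) h44) h66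
  have hD : (1 - x1 ^ 4) * (1 - x1 ^ 3 * x2) * (1 - x1 ^ 2 * x2 ^ 2) *
      (1 - x1 * x2 ^ 3) * (1 - x2 ^ 4) ≠ 0 :=
    mul_ne_zero (mul_ne_zero (mul_ne_zero (mul_ne_zero h40 h31) h22) h13) h04
  rw [mul_one_div, mul_div_assoc' x1, mul_div_assoc' x2,
    div_sub_div _ _ hd1 hd2, div_eq_div_iff hD (mul_ne_zero hd1 hd2)]
  ring
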